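/- Let (m(r), p(r)) be a regular solution of the TOV system for an equation of state with dρ/dp ≥ 0. Then the density never exceeds the average density: for every r in the domain of the solution, 4πr³ρ(p(r)) ≤ 3m(r). -/

import Mathlib

open Real Set Filter Topology

/-- The domain `(0, R)` of radii, where `R ∈ (0,∞]`. -/
def tovDomain (R : ENNReal) : Set ℝ := {r : ℝ | 0 < r ∧ ENNReal.ofReal r < R}

/-- `(m, p)` is a solution of the TOV system on `(0, R)` with `p > 0`, `m > 0` and
`2Gm < c²r`. -/
def IsTOVSolution (G c : ℝ) (ρ m p : ℝ → ℝ) (R : ENNReal) : Prop :=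
  ∀ r ∈ tovDomain R,
    0 < p r ∧ 0 < m r ∧ 2 * G * m r < c ^ 2 * r ∧
    HasDerivAt m (4 * Real.pi * r ^ 2 * ρ (p r)) r ∧
    HasDerivAt p (-(G * m r * ρ (p r) / r ^ 2) * (1 + p r / (ρ (p r) * c ^ 2)) *
      (1 + 4 * Real.pi * r ^ 3 * p r / (m r * c ^ 2)) *
      (1 - 2 * G * m r / (c ^ 2 * r))⁻¹) r

/-- `ρ` is a barotropic equation of state: continuous on `[0,∞)`, C² and positive on
`(0,∞)`, with `dρ/dp ≥ 0`. -/
def IsBarotropic (ρ : ℝ → ℝ) : Prop :=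
  ContinuousOn ρ (Ici 0) ∧ ContDiffOn ℝ 2 ρ (Ioi 0) ∧
  (∀ q ≥ 0, 0 ≤ ρ q) ∧ (∀ q > 0, 0 < ρ q) ∧ (∀ q > 0, 0 ≤ deriv ρ q)

/-- The interval `(0, R)` is maximal: the solution admits no extension to a larger
interval. -/
def IsMaximalTOVSolution (G c : ℝ) (ρ m p : ℝ → ℝ) (R : ENNReal) : Prop :=
  IsTOVSolution G c ρ m p R ∧
  ∀ (R' : ENNReal) (m' p' : ℝ → ℝ), R < R' → IsTOVSolution G c ρ m' p' R' →
    Set.EqOn m' m (tovDomain R) → ¬ Set.EqOn p' p (tovDomain R)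

/-- A regular solution of the TOV system with central pressure `pc > 0`: a maximal
solution with `p(r) → pc` and `m(r)/r³ → (4π/3)ρ(pc)` as `r → 0⁺`. -/
def IsRegularTOVSolution (G c : ℝ) (ρ m p : ℝ → ℝ) (R : ENNReal) (pc : ℝ) : Prop :=
  IsMaximalTOVSolution G c ρ m p R ∧ 0 < pc ∧
  Filter.Tendsto p (nhdsWithin 0 (Ioi 0)) (nhds pc) ∧
  Filter.Tendsto (fun r => m r / r ^ 3) (nhdsWithin 0 (Ioi 0))
    (nhds (4 * Real.pi / 3 * ρ pc))

lemma tovDomain_cases (R : ENNReal) :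
    tovDomain R = Ioi 0 ∨ tovDomain R = Ioo 0 R.toReal := by
  rcases eq_or_ne R ⊤ with h | h
  · left; ext x; simp [tovDomain, h]
  · right; ext x
    simp only [tovDomain, mem_setOf_eq, mem_Ioo, and_congr_right_iff]
    intro hx
    exact ENNReal.ofReal_lt_iff_lt_toReal hx.le h

lemma tovDomain_open (R : ENNReal) : IsOpen (tovDomain R) := by
  rcases tovDomain_cases R with h | h <;> rw [h]
  · exact isOpen_Ioi
  · exact isOpen_Ioo

lemma tovDomain_convex (R : ENNReal) : Convex ℝ (tovDomain R) := by
  rcases tovDomain_cases R with h | h <;> rw [h]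
  · exact convex_Ioi 0
  · exact convex_Ioo 0 R.toReal

/-- For a regular solution of the TOV system with `dρ/dp ≥ 0`, the
density never exceeds the average density: `4πr³ρ(p(r)) ≤ 3m(r)` throughout. -/
theorem stmt8
    (G c : ℝ) (hG : 0 < G) (hc : 0 < c)
    (ρ : ℝ → ℝ) (hρ : IsBarotropic ρ)
    (m p : ℝ → ℝ) (R : ENNReal) (pc : ℝ)
    (hsol : IsRegularTOVSolution G c ρ m p R pc) :
    ∀ r ∈ tovDomain R, 4 * Real.pi * r ^ 3 * ρ (p r) ≤ 3 * m r := by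
  obtain ⟨⟨hTOV, _⟩, hpc, hplim, hmlim⟩ := hsol
  obtain ⟨-, hρC2, -, hρpos, hρ'⟩ := hρ
  have hint : interior (tovDomain R) = tovDomain R := (tovDomain_open R).interior_eq
  -- ρ is monotone on (0,∞)
  have hρmono : MonotoneOn ρ (Ioi 0) := by
    have hdiff : DifferentiableOn ℝ ρ (Ioi (0:ℝ)) :=
      hρC2.differentiableOn (by norm_num)
    refine monotoneOn_of_deriv_nonneg (convex_Ioi 0)
      (hdiff.continuousOn) (by rwa [interior_Ioi]) ?_
    rw [interior_Ioi]; exact fun x hx => hρ' x hx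
  -- p is antitone on the domain
  have hpanti : AntitoneOn p (tovDomain R) := by
    refine antitoneOn_of_deriv_nonpos (tovDomain_convex R)
      (fun x hx => ((hTOV x hx).2.2.2.2.differentiableAt.continuousAt).continuousWithinAt)
      (fun x hx => by
        rw [hint] at hx
        exact (hTOV x hx).2.2.2.2.differentiableAt.differentiableWithinAt) ?_
    intro x hx
    rw [hint] at hx
    obtain ⟨hp, hm, hmetric, -, hp'⟩ := hTOV x hx
    rw [hp'.deriv]
    have hx0 : (0:ℝ) < x := hx.1
    have hρx : 0 < ρ (p x) := hρpos _ hp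
    have hA : 0 < G * m x * ρ (p x) / x ^ 2 := by positivity
    have hB : (0:ℝ) < 1 + p x / (ρ (p x) * c ^ 2) := by
      have : 0 ≤ p x / (ρ (p x) * c ^ 2) := div_nonneg hp.le (by positivity)
      linarith
    have hC : (0:ℝ) < 1 + 4 * Real.pi * x ^ 3 * p x / (m x * c ^ 2) := by
      have : 0 ≤ 4 * Real.pi * x ^ 3 * p x / (m x * c ^ 2) :=
        div_nonneg (by positivity) (by positivity)
      linarith
    have hD : (0:ℝ) ≤ (1 - 2 * G * m x / (c ^ 2 * x))⁻¹ := by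
      have h1 : 2 * G * m x / (c ^ 2 * x) < 1 := (div_lt_one (by positivity)).2 hmetric
      have : (0:ℝ) < 1 - 2 * G * m x / (c ^ 2 * x) := by linarith
      positivity
    have h0 : 0 ≤ (G * m x * ρ (p x) / x ^ 2) * (1 + p x / (ρ (p x) * c ^ 2)) *
        (1 + 4 * Real.pi * x ^ 3 * p x / (m x * c ^ 2)) *
        (1 - 2 * G * m x / (c ^ 2 * x))⁻¹ :=
      mul_nonneg (mul_nonneg (mul_nonneg hA.le hB.le) hC.le) hD
    nlinarith [h0]
  intro r hr
  have hr0 : (0:ℝ) < r := hr.1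
  have hpr : 0 < p r := (hTOV r hr).1
  -- every point of Ioc 0 r is in the domain
  have hsub : Ioc (0:ℝ) r ⊆ tovDomain R := fun s hs =>
    ⟨hs.1, lt_of_le_of_lt (ENNReal.ofReal_le_ofReal hs.2) hr.2⟩
  set k : ℝ := ρ (p r) with hk
  set g : ℝ → ℝ := fun s => m s - 4 * Real.pi / 3 * k * s ^ 3 with hg
  -- derivative of g
  have hderivg : ∀ s ∈ tovDomain R,
      HasDerivAt g (4 * Real.pi * s ^ 2 * ρ (p s) - 4 * Real.pi * k * s ^ 2) s := by
    intro s hs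
    have hm' := (hTOV s hs).2.2.2.1
    have h2 : HasDerivAt (fun x : ℝ => 4 * Real.pi / 3 * k * x ^ 3)
        (4 * Real.pi / 3 * k * (↑3 * s ^ 2)) s := by
      simpa using (hasDerivAt_pow 3 s).const_mul (4 * Real.pi / 3 * k)
    have := hm'.sub h2
    convert this using 1
    · rfl
    · rfl
    · rfl
    ring
  -- g is monotone on Ioc 0 r
  have hgmono : MonotoneOn g (Ioc 0 r) := by
    refine monotoneOn_of_deriv_nonneg (convex_Ioc 0 r)
      (fun s hs => ((hderivg s (hsub hs)).differentiableAt.continuousAt).continuousWithinAt)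
      (fun s hs => by
        rw [interior_Ioc] at hs
        exact (hderivg s (hsub (Ioo_subset_Ioc_self hs))).differentiableAt.differentiableWithinAt)
      ?_
    intro s hs
    rw [interior_Ioc] at hs
    have hsd : s ∈ tovDomain R := hsub (Ioo_subset_Ioc_self hs)
    rw [(hderivg s hsd).deriv]
    have hple : p r ≤ p s := hpanti hsd hr hs.2.le
    have hρle : k ≤ ρ (p s) := hρmono (mem_Ioi.2 hpr) (mem_Ioi.2 (hTOV s hsd).1) hple
    have h4 : (0:ℝ) ≤ 4 * Real.pi * s ^ 2 := by positivity
    nlinarith [mul_nonneg h4 (sub_nonneg.2 hρle)]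
  -- g tends to 0 at 0⁺
  have hlim0 : Tendsto g (nhdsWithin 0 (Ioi 0)) (nhds 0) := by
    have h1 : Tendsto (fun s => m s / s ^ 3 - 4 * Real.pi / 3 * k)
        (nhdsWithin 0 (Ioi 0)) (nhds (4 * Real.pi / 3 * ρ pc - 4 * Real.pi / 3 * k)) :=
      hmlim.sub tendsto_const_nhds
    have h2 : Tendsto (fun s : ℝ => s ^ 3) (nhdsWithin 0 (Ioi 0)) (nhds 0) := by
      have := ((continuous_pow 3).tendsto (0:ℝ)).mono_left
        (nhdsWithin_le_nhds (s := Ioi (0:ℝ)))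
      simpa using this
    have h3 := h2.mul h1
    rw [zero_mul] at h3
    refine h3.congr' ?_
    filter_upwards [self_mem_nhdsWithin] with s hs
    have hs3 : (s:ℝ) ^ 3 ≠ 0 := pow_ne_zero _ (ne_of_gt hs)
    rw [mul_sub, mul_div_cancel₀ _ hs3]
    ring
  -- conclude
  have hev : ∀ᶠ s in nhdsWithin 0 (Ioi 0), g s ≤ g r := by
    filter_upwards [Ioo_mem_nhdsGT_of_mem (by exact ⟨le_refl 0, hr0⟩ : (0:ℝ) ∈ Ico 0 r)]
      with s hs
    exact hgmono ⟨hs.1, hs.2.le⟩ ⟨hr0, le_refl r⟩ hs.2.le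
  have h0le : (0:ℝ) ≤ g r := le_of_tendsto hlim0 hev
  simp only [hg] at h0le
  nlinarith [h0le]
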